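/- arXiv:1205.2359 — 5 statements merged into one kernel-verified Lean document; each statement's English description precedes it below -/
import Mathlib

section
/- Let f : ℂ → ℂ be complex differentiable (holomorphic) on an open set containing the closed unit disc {z : |z| ≤ 1}, and let m be a natural number. Then for every real ε with 0 < ε < 1, the integral over the closed annulus A(ε,1) = {z ∈ ℂ : ε ≤ |z| ≤ 1} of the function z ↦ f(z) · z^m / conj(z), with respect to Lebesgue area measure on ℂ, equals 0. -/
open MeasureTheory
open scoped NNReal ENNReal

lemma monomial_integral_zero (k : ℕ) (ε : ℝ) :
    (∫ z in {z : ℂ | ε ≤ ‖z‖ ∧ ‖z‖ ≤ 1},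
      z ^ k / (starRingEnd ℂ) z) = 0 := by
  set S : Set ℂ := {z : ℂ | ε ≤ ‖z‖ ∧ ‖z‖ ≤ 1} with hS
  set ω : ℂ := Complex.exp ((Real.pi / (k + 1) : ℝ) * Complex.I) with hω
  have habs : ‖ω‖ = 1 := Complex.norm_exp_ofReal_mul_I _
  have hpow : ω ^ (k + 1) = -1 := by
    rw [hω, ← Complex.exp_nat_mul]
    have h1 : ((k : ℂ) + 1) ≠ 0 := Nat.cast_add_one_ne_zero k
    have : ((k + 1 : ℕ) : ℂ) * (((Real.pi / (k + 1) : ℝ) : ℂ) * Complex.I)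
        = Real.pi * Complex.I := by
      push_cast
      field_simp
    rw [this, Complex.exp_pi_mul_I]
  have hω0 : ω ≠ 0 := Complex.exp_ne_zero _
  have hconj : (starRingEnd ℂ) ω = ω⁻¹ := by
    rw [Complex.inv_def, Complex.normSq_eq_norm_sq, habs]
    simp
  set c : Circle := ⟨ω, mem_sphere_zero_iff_norm.2 habs⟩ with hc
  have hmp : MeasurePreserving (rotation c) volume volume :=
    (rotation c).measurePreserving
  have hemb : MeasurableEmbedding (rotation c) :=
    (rotation c).toHomeomorph.measurableEmbedding
  have hcc : (c : ℂ) = ω := rfl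
  have hpre : (rotation c) ⁻¹' S = S := by
    ext z
    simp [hS, rotation_apply, hcc, norm_mul, habs]
  have hSm : MeasurableSet S := by
    have : S = (fun z : ℂ => ‖z‖) ⁻¹' (Set.Icc ε 1) := by
      ext z; simp [hS, Set.mem_Icc]
    rw [this]
    exact measurableSet_Icc.preimage continuous_norm.measurable
  have hterm : ∀ z : ℂ, (ω * z) ^ k / (starRingEnd ℂ) (ω * z)
      = -(z ^ k / (starRingEnd ℂ) z) := by
    intro z
    have hk : ω ^ k = -ω⁻¹ := by
      rw [pow_succ] at hpow
      field_simp
      linear_combination hpow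
    rw [map_mul, hconj, mul_pow, hk, neg_mul, neg_div,
      mul_div_mul_left _ _ (inv_ne_zero hω0)]
  have key : (∫ z in S, z ^ k / (starRingEnd ℂ) z)
      = -∫ z in S, z ^ k / (starRingEnd ℂ) z := by
    conv_lhs => rw [← hmp.setIntegral_preimage_emb hemb
      (fun z => z ^ k / (starRingEnd ℂ) z) S]
    rw [hpre]
    have : ∀ z ∈ S, (rotation c z) ^ k / (starRingEnd ℂ) (rotation c z)
        = -(z ^ k / (starRingEnd ℂ) z) := fun z _ => by
      rw [rotation_apply, hcc]; exact hterm z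
    rw [setIntegral_congr_fun hSm this, integral_neg]
  linear_combination key / 2

/-- The vanishing in the special case `K = -1` of Lemma `BddInDisks`: if `f` is holomorphic on
an open set containing the closed unit disc and `m : ℕ`, then for every `0 < ε < 1` the
integral of `z ↦ f z * z ^ m / conj z` over the closed annulus `{z : ε ≤ |z| ≤ 1}` with respect
to Lebesgue area measure on `ℂ` vanishes. -/
theorem integral_holo_mul_pow_div_conj_annulus_eq_zero (f : ℂ → ℂ) (U : Set ℂ)
    (hU : IsOpen U) (hsub : Metric.closedBall (0 : ℂ) 1 ⊆ U)
    (hf : DifferentiableOn ℂ f U) (m : ℕ) (ε : ℝ) (hε0 : 0 < ε) (hε1 : ε < 1) :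
    (∫ z in {z : ℂ | ε ≤ ‖z‖ ∧ ‖z‖ ≤ 1},
      f z * z ^ m / (starRingEnd ℂ) z) = 0 := by
  set S : Set ℂ := {z : ℂ | ε ≤ ‖z‖ ∧ ‖z‖ ≤ 1} with hS
  have hSm : MeasurableSet S := by
    have : S = (fun z : ℂ => ‖z‖) ⁻¹' (Set.Icc ε 1) := by
      ext z; simp [hS, Set.mem_Icc]
    rw [this]
    exact measurableSet_Icc.preimage continuous_norm.measurable
  have hSsub : S ⊆ Metric.closedBall (0 : ℂ) 1 := fun z hz => by
    simpa [Metric.mem_closedBall, Complex.dist_eq] using hz.2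
  have hvol : volume S < ⊤ :=
    lt_of_le_of_lt (measure_mono hSsub) (measure_closedBall_lt_top)
  obtain ⟨δ, hδ, hsub'⟩ :=
    (isCompact_closedBall (0 : ℂ) 1).exists_cthickening_subset_open hU hsub
  set R : ℝ≥0 := ⟨1 + δ, by positivity⟩ with hRdef
  have hR1 : (1 : ℝ≥0) < R := by
    rw [← NNReal.coe_lt_coe]
    show (1 : ℝ) < 1 + δ
    linarith
  have hball : Metric.closedBall (0 : ℂ) R ⊆ U := by
    have : Metric.cthickening δ (Metric.closedBall (0 : ℂ) 1)
        = Metric.closedBall (0 : ℂ) (δ + 1) := cthickening_closedBall hδ.le zero_le_one _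
    rw [this] at hsub'
    have hRe : (R : ℝ) = δ + 1 := by rw [hRdef]; exact add_comm 1 δ
    rw [hRe]
    exact hsub'
  have hfd : DifferentiableOn ℂ f (Metric.closedBall 0 R) := hf.mono hball
  have hps := hfd.hasFPowerSeriesOnBall (lt_trans zero_lt_one hR1)
  set p := cauchyPowerSeries f 0 R with hp
  have h1rad : (1 : ℝ≥0∞) < p.radius :=
    lt_of_lt_of_le (by exact_mod_cast hR1) hps.r_le
  have hsum : Summable fun n => ‖p.coeff n‖ := by
    have h1 : (1 : ℂ) ∈ Metric.eball (0 : ℂ) p.radius := by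
      rw [Metric.mem_eball, edist_eq_enorm_sub]
      simpa using h1rad
    have := p.summable_norm_apply h1
    simpa [FormalMultilinearSeries.apply_eq_pow_smul_coeff] using this
  set F : ℕ → ℂ → ℂ := fun n z => p.coeff n * z ^ (n + m) / (starRingEnd ℂ) z with hF
  have hHS : ∀ z ∈ S, HasSum (fun n => F n z) (f z * z ^ m / (starRingEnd ℂ) z) := by
    intro z hz
    have hzball : z ∈ Metric.eball (0 : ℂ) R := by
      rw [Metric.mem_eball, edist_eq_enorm_sub, enorm_eq_nnnorm]
      refine ENNReal.coe_lt_coe.2 ?_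
      refine lt_of_le_of_lt ?_ hR1
      rw [← NNReal.coe_le_coe]
      simpa using hz.2
    have h0 := hps.hasSum hzball
    rw [zero_add] at h0
    have h1 : HasSum (fun n => p.coeff n * z ^ n) (f z) := by
      simpa [FormalMultilinearSeries.apply_eq_pow_smul_coeff, smul_eq_mul,
        mul_comm] using h0
    have h2 := h1.mul_right (z ^ m / (starRingEnd ℂ) z)
    have heq : (fun n => p.coeff n * z ^ n * (z ^ m / (starRingEnd ℂ) z))
        = fun n => F n z := by
      funext n
      simp only [hF, pow_add]
      ring
    rw [heq, ← mul_div_assoc] at h2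
    exact h2
  have hmeas : ∀ n, AEStronglyMeasurable (F n) (volume.restrict S) := by
    intro n
    refine (Measurable.aestronglyMeasurable ?_)
    simp only [hF, div_eq_mul_inv]
    exact (measurable_const.mul (measurable_id.pow_const _)).mul
      Complex.continuous_conj.measurable.inv
  have hbnd : ∀ n, (∫⁻ z in S, ‖F n z‖₊) ≤
      (‖p.coeff n‖₊ : ℝ≥0∞) * (ENNReal.ofReal ε⁻¹ * volume S) := by
    intro n
    have hpt : ∀ z ∈ S, (‖F n z‖₊ : ℝ≥0∞) ≤
        (‖p.coeff n‖₊ : ℝ≥0∞) * ENNReal.ofReal ε⁻¹ := by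
      intro z hz
      have hz1 : ‖z‖ ≤ 1 := hz.2
      have hzε : ε ≤ ‖z‖ := hz.1
      have hr : ‖F n z‖ ≤ ‖p.coeff n‖ * ε⁻¹ := by
        simp only [hF]
        simp only [norm_div, norm_mul, norm_pow, Complex.norm_conj]
        rw [mul_div_assoc]
        refine mul_le_mul_of_nonneg_left ?_ (norm_nonneg _)
        rw [← one_div]
        exact div_le_div₀ zero_le_one (pow_le_one₀ (norm_nonneg z) hz1) hε0 hzε
      calc (‖F n z‖₊ : ℝ≥0∞) = ENNReal.ofReal ‖F n z‖ := by
            rw [ofReal_norm, enorm_eq_nnnorm]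
        _ ≤ ENNReal.ofReal (‖p.coeff n‖ * ε⁻¹) := ENNReal.ofReal_le_ofReal hr
        _ = (‖p.coeff n‖₊ : ℝ≥0∞) * ENNReal.ofReal ε⁻¹ := by
            rw [ENNReal.ofReal_mul (norm_nonneg _), ofReal_norm, enorm_eq_nnnorm]
    calc (∫⁻ z in S, ‖F n z‖₊)
        ≤ ∫⁻ _ in S, (‖p.coeff n‖₊ : ℝ≥0∞) * ENNReal.ofReal ε⁻¹ :=
          setLIntegral_mono measurable_const hpt
      _ = (‖p.coeff n‖₊ : ℝ≥0∞) * ENNReal.ofReal ε⁻¹ * volume S := setLIntegral_const _ _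
      _ = (‖p.coeff n‖₊ : ℝ≥0∞) * (ENNReal.ofReal ε⁻¹ * volume S) := by ring
  have hfin : (∑' n, ∫⁻ z in S, ‖F n z‖₊) ≠ ⊤ := by
    refine ne_top_of_le_ne_top ?_ (ENNReal.tsum_le_tsum hbnd)
    rw [ENNReal.tsum_mul_right]
    refine ENNReal.mul_ne_top ?_ (ENNReal.mul_ne_top ENNReal.ofReal_ne_top hvol.ne)
    rw [ENNReal.tsum_coe_ne_top_iff_summable]
    rw [← NNReal.summable_coe]
    simpa using hsum
  have hcongr : (∫ z in S, f z * z ^ m / (starRingEnd ℂ) z)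
      = ∫ z in S, ∑' n, F n z :=
    setIntegral_congr_fun hSm fun z hz => ((hHS z hz).tsum_eq).symm
  rw [hcongr, integral_tsum hmeas hfin]
  have hzero : ∀ n, (∫ z in S, F n z) = 0 := by
    intro n
    have : ∀ z : ℂ, F n z = p.coeff n * (z ^ (n + m) / (starRingEnd ℂ) z) := by
      intro z; simp only [hF]; rw [mul_div_assoc]
    simp_rw [this]
    rw [integral_const_mul, monomial_integral_zero (n + m) ε, mul_zero]
  simp [hzero]
end

section
/- Let c, c₁, c₂ ∈ ℂ with c ≠ 0, let h₁, h₂ : ℂ → ℂ be complex differentiable (holomorphic) on an open set containing the closed unit disc, let L ≥ 0, and let H : ℂ → ℂ be measurable with |H(z)| ≤ L·|z| for all |z| ≤ 1. Then there exists a constant C > 0 such that for every r₀ with 0 < r₀ < 1: the integrand below is integrable on the closed annulus A(r₀,1) = {z ∈ ℂ : r₀ ≤ |z| ≤ 1} and | ∫_{A(r₀,1)} (c₁/z + h₁(z))·(c₂/z + h₂(z)) · (z/conj(z)) · (conj(c)/c + H(z)) dA − 2π·c₁·c₂·(conj(c)/c)·log(1/r₀) | ≤ C. -/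
open MeasureTheory

open Set


lemma annulus_measurable (r₀ : ℝ) :
    MeasurableSet {z : ℂ | r₀ ≤ ‖z‖ ∧ ‖z‖ ≤ 1} := by
  have : {z : ℂ | r₀ ≤ ‖z‖ ∧ ‖z‖ ≤ 1}
      = (fun z : ℂ => ‖z‖) ⁻¹' (Set.Icc r₀ 1) := by
    ext z; simp
  rw [this]
  exact measurable_norm measurableSet_Icc

lemma radial_integral (g : ℝ → ℝ) (r₀ : ℝ) (h0 : 0 < r₀) :
    ∫ z in {z : ℂ | r₀ ≤ ‖z‖ ∧ ‖z‖ ≤ 1}, g ‖z‖ =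
      2 * Real.pi * ∫ y in Set.Icc r₀ 1, y * g y := by
  rw [← integral_indicator (annulus_measurable r₀)]
  have h1 : (Set.indicator {z : ℂ | r₀ ≤ ‖z‖ ∧ ‖z‖ ≤ 1}
      (fun z : ℂ => g ‖z‖)) = fun z : ℂ => Set.indicator (Set.Icc r₀ 1) g ‖z‖ := by
    funext z
    simp [Set.indicator_apply, Set.mem_Icc, Set.mem_setOf_eq]
  rw [h1, integral_fun_norm_addHaar volume (Set.indicator (Set.Icc r₀ 1) g)]
  have hdim : Module.finrank ℝ ℂ = 2 := Complex.finrank_real_complex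
  rw [hdim]
  have hball : (volume (Metric.ball (0:ℂ) 1)).toReal = Real.pi := by
    simp [Complex.volume_ball]
  rw [measureReal_def, hball]
  have h2 : ∀ y : ℝ, y ^ (2-1) • (Set.indicator (Set.Icc r₀ 1) g) y
      = Set.indicator (Set.Icc r₀ 1) (fun y => y * g y) y := by
    intro y
    simp only [pow_one, smul_eq_mul]
    by_cases hy : y ∈ Set.Icc r₀ 1 <;> simp [Set.indicator_of_mem, Set.indicator_of_notMem, hy]
  simp_rw [h2]
  rw [integral_indicator measurableSet_Icc, Measure.restrict_restrict measurableSet_Icc]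
  have hsub2 : Set.Icc r₀ 1 ∩ Set.Ioi 0 = Set.Icc r₀ 1 :=
    Set.inter_eq_left.mpr (fun y hy => lt_of_lt_of_le h0 hy.1)
  rw [hsub2, nsmul_eq_mul, smul_eq_mul]
  push_cast
  ring

lemma arith_bound (x1 x2 M L s : ℝ) (hM : 0 ≤ M) (hL : 0 ≤ L)
    (hs : 0 < s) (hs1 : s ≤ 1) :
    (x1/s + M)*(x2/s + M)*(L*s) + ((x1/s)*M + M*(x2/s) + M*M) ≤
      (L*x1*x2 + M*(x1+x2))/s + (L*M*(x1+x2) + L*M*M + M*M) := by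
  rw [← sub_nonneg]
  have key : (L*x1*x2 + M*(x1+x2))/s + (L*M*(x1+x2) + L*M*M + M*M)
      - ((x1/s + M)*(x2/s + M)*(L*s) + ((x1/s)*M + M*(x2/s) + M*M)) = L*M*M*(1-s) := by
    field_simp
    ring
  rw [key]
  have := mul_nonneg (mul_nonneg hL hM) hM
  nlinarith

set_option maxHeartbeats 1000000 in
/-- The analytic core of Lemma `DPiDivergentTerm`: with `c ≠ 0`, `h₁, h₂` holomorphic on an
open set containing the closed unit disc, and `H` measurable with `|H z| ≤ L * |z|` on the
closed unit disc, there is a constant `C > 0` such that for every inner radius `0 < r₀ < 1` the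
integrand is integrable on the closed annulus `{z : r₀ ≤ |z| ≤ 1}` and the integral differs
from `2π · c₁ · c₂ · (conj c / c) · log (1/r₀)` by at most `C` in modulus. -/
theorem abs_integral_sub_log_term_le (c c₁ c₂ : ℂ) (hc : c ≠ 0) (h₁ h₂ : ℂ → ℂ) (U : Set ℂ)
    (hU : IsOpen U) (hsub : Metric.closedBall (0 : ℂ) 1 ⊆ U)
    (hh₁ : DifferentiableOn ℂ h₁ U) (hh₂ : DifferentiableOn ℂ h₂ U)
    (L : ℝ) (hL : 0 ≤ L) (H : ℂ → ℂ) (hHmeas : Measurable H)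
    (hH : ∀ z : ℂ, ‖z‖ ≤ 1 → ‖H z‖ ≤ L * ‖z‖) :
    ∃ C > (0 : ℝ), ∀ r₀ : ℝ, 0 < r₀ → r₀ < 1 →
      IntegrableOn (fun z : ℂ =>
        (c₁ / z + h₁ z) * (c₂ / z + h₂ z) * (z / (starRingEnd ℂ) z) *
          ((starRingEnd ℂ) c / c + H z))
        {z : ℂ | r₀ ≤ ‖z‖ ∧ ‖z‖ ≤ 1} volume ∧
      ‖(∫ z in {z : ℂ | r₀ ≤ ‖z‖ ∧ ‖z‖ ≤ 1},
          (c₁ / z + h₁ z) * (c₂ / z + h₂ z) * (z / (starRingEnd ℂ) z) *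
            ((starRingEnd ℂ) c / c + H z)) -
        2 * (Real.pi : ℂ) * c₁ * c₂ * ((starRingEnd ℂ) c / c) *
          (Real.log (1 / r₀) : ℂ)‖ ≤ C := by
  set k : ℂ := (starRingEnd ℂ) c / c with hk_def
  have hknorm : ‖k‖ = 1 := by
    rw [hk_def, norm_div, RCLike.norm_conj, div_self (norm_ne_zero_iff.mpr hc)]
  -- bounds for h₁, h₂ on the closed unit ball
  obtain ⟨M₁, hM₁⟩ := (isCompact_closedBall (0:ℂ) 1).exists_bound_of_continuousOn
    (hh₁.continuousOn.mono hsub)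
  obtain ⟨M₂, hM₂⟩ := (isCompact_closedBall (0:ℂ) 1).exists_bound_of_continuousOn
    (hh₂.continuousOn.mono hsub)
  set M : ℝ := max M₁ M₂ with hM_def
  have h0ball : (0:ℂ) ∈ Metric.closedBall (0:ℂ) 1 := by
    simp [Metric.mem_closedBall]
  have hM0 : 0 ≤ M := le_trans (norm_nonneg (h₁ 0)) (le_trans (hM₁ 0 h0ball) (le_max_left _ _))
  have hMb₁ : ∀ z ∈ Metric.closedBall (0:ℂ) 1, ‖h₁ z‖ ≤ M :=
    fun z hz => le_trans (hM₁ z hz) (le_max_left _ _)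
  have hMb₂ : ∀ z ∈ Metric.closedBall (0:ℂ) 1, ‖h₂ z‖ ≤ M :=
    fun z hz => le_trans (hM₂ z hz) (le_max_right _ _)
  set A : ℝ := L*‖c₁‖*‖c₂‖ + M*(‖c₁‖+‖c₂‖) with hA_def
  set B : ℝ := L*M*(‖c₁‖+‖c₂‖) + L*M*M + M*M with hB_def
  have hA0 : 0 ≤ A := by positivity
  have hB0 : 0 ≤ B := by positivity
  refine ⟨2*Real.pi*(A+B) + 1, by positivity, fun r₀ hr0 hr1 => ?_⟩
  set S : Set ℂ := {z : ℂ | r₀ ≤ ‖z‖ ∧ ‖z‖ ≤ 1} with hS_def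
  have hSmeas : MeasurableSet S := annulus_measurable r₀
  have hSsub : S ⊆ Metric.closedBall (0:ℂ) 1 := by
    intro z hz
    rw [Metric.mem_closedBall, dist_zero_right]
    exact hz.2
  have hSfin : volume S ≠ ⊤ :=
    ((measure_mono hSsub).trans_lt measure_closedBall_lt_top).ne
  -- basic facts about points of S
  have hzS : ∀ z ∈ S, r₀ ≤ ‖z‖ ∧ ‖z‖ ≤ 1 := by
    intro z hz
    exact ⟨hz.1, hz.2⟩
  have hzpos : ∀ z ∈ S, (0:ℝ) < ‖z‖ := fun z hz => lt_of_lt_of_le hr0 (hzS z hz).1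
  have hzne : ∀ z ∈ S, z ≠ 0 := fun z hz => norm_pos_iff.mp (hzpos z hz)
  set F : ℂ → ℂ := fun z : ℂ =>
    (c₁ / z + h₁ z) * (c₂ / z + h₂ z) * (z / (starRingEnd ℂ) z) * (k + H z) with hF_def
  set main : ℂ → ℂ := fun z : ℂ => c₁ * c₂ * k * ((Complex.normSq z : ℝ) : ℂ)⁻¹ with hmain_def
  -- measurability
  have hmesF : AEStronglyMeasurable F (volume.restrict S) := by
    have m1 : AEStronglyMeasurable (fun z : ℂ => c₁ / z + h₁ z) (volume.restrict S) :=
      ((measurable_const.div measurable_id).aestronglyMeasurable).add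
        ((hh₁.continuousOn.mono (hSsub.trans hsub)).aestronglyMeasurable hSmeas)
    have m2 : AEStronglyMeasurable (fun z : ℂ => c₂ / z + h₂ z) (volume.restrict S) :=
      ((measurable_const.div measurable_id).aestronglyMeasurable).add
        ((hh₂.continuousOn.mono (hSsub.trans hsub)).aestronglyMeasurable hSmeas)
    have m3 : AEStronglyMeasurable (fun z : ℂ => z / (starRingEnd ℂ) z) (volume.restrict S) :=
      (measurable_id.div Complex.continuous_conj.measurable).aestronglyMeasurable
    have m4 : AEStronglyMeasurable (fun z : ℂ => k + H z) (volume.restrict S) :=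
      (measurable_const.add hHmeas).aestronglyMeasurable
    exact ((m1.mul m2).mul m3).mul m4
  -- pointwise bounds of factors
  have hfac1 : ∀ z ∈ S, ‖c₁ / z + h₁ z‖ ≤ ‖c₁‖/‖z‖ + M := by
    intro z hz
    refine le_trans (norm_add_le _ _) ?_
    rw [norm_div]
    exact add_le_add le_rfl (hMb₁ z (hSsub hz))
  have hfac2 : ∀ z ∈ S, ‖c₂ / z + h₂ z‖ ≤ ‖c₂‖/‖z‖ + M := by
    intro z hz
    refine le_trans (norm_add_le _ _) ?_
    rw [norm_div]
    exact add_le_add le_rfl (hMb₂ z (hSsub hz))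
  have hfac3 : ∀ z ∈ S, ‖z / (starRingEnd ℂ) z‖ = 1 := by
    intro z hz
    rw [norm_div, RCLike.norm_conj, div_self (hzpos z hz).ne']
  have hfac4 : ∀ z ∈ S, ‖k + H z‖ ≤ 1 + L := by
    intro z hz
    refine le_trans (norm_add_le _ _) ?_
    rw [hknorm]
    have := hH z (hzS z hz).2
    have h2 : L * ‖z‖ ≤ L := by
      nlinarith [(hzS z hz).2, norm_nonneg z]
    linarith
  -- integrability of F
  have hFb : ∀ z ∈ S, ‖F z‖ ≤ (‖c₁‖/r₀ + M) * (‖c₂‖/r₀ + M) * 1 * (1 + L) := by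
    intro z hz
    have h1' : ‖c₁‖/‖z‖ + M ≤ ‖c₁‖/r₀ + M := by
      have := div_le_div_of_nonneg_left (norm_nonneg c₁) hr0 (hzS z hz).1
      linarith
    have h2' : ‖c₂‖/‖z‖ + M ≤ ‖c₂‖/r₀ + M := by
      have := div_le_div_of_nonneg_left (norm_nonneg c₂) hr0 (hzS z hz).1
      linarith
    rw [hF_def]
    simp only [norm_mul]
    rw [hfac3 z hz]
    have p1 := (hfac1 z hz).trans h1'
    have p2 := (hfac2 z hz).trans h2'
    have p4 := hfac4 z hz
    have n1 : (0:ℝ) ≤ ‖c₁ / z + h₁ z‖ := norm_nonneg _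
    have n2 : (0:ℝ) ≤ ‖c₂ / z + h₂ z‖ := norm_nonneg _
    have n4 : (0:ℝ) ≤ ‖k + H z‖ := norm_nonneg _
    have q1 : (0:ℝ) ≤ ‖c₁‖/r₀ + M := le_trans n1 p1
    have q2 : (0:ℝ) ≤ ‖c₂‖/r₀ + M := le_trans n2 p2
    calc ‖c₁ / z + h₁ z‖ * ‖c₂ / z + h₂ z‖ * 1 * ‖k + H z‖
        = (‖c₁ / z + h₁ z‖ * ‖c₂ / z + h₂ z‖) * ‖k + H z‖ := by ring
      _ ≤ ((‖c₁‖/r₀ + M) * (‖c₂‖/r₀ + M)) * (1 + L) :=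
          mul_le_mul (mul_le_mul p1 p2 n2 q1) p4 n4 (mul_nonneg q1 q2)
      _ = (‖c₁‖/r₀ + M) * (‖c₂‖/r₀ + M) * 1 * (1 + L) := by ring
  have hFint : IntegrableOn F S volume := by
    refine ⟨hmesF, HasFiniteIntegral.restrict_of_bounded
      (C := (‖c₁‖/r₀ + M) * (‖c₂‖/r₀ + M) * 1 * (1 + L)) hSfin.lt_top ?_⟩
    exact (ae_restrict_iff' hSmeas).mpr (Filter.Eventually.of_forall hFb)
  -- integrability of main
  have hmainmes : Measurable main := by
    exact measurable_const.mul
      ((Complex.measurable_ofReal.comp Complex.continuous_normSq.measurable).inv)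
  have hmainb : ∀ z ∈ S, ‖main z‖ ≤ ‖c₁‖ * ‖c₂‖ * ((r₀^2)⁻¹) := by
    intro z hz
    rw [hmain_def]
    simp only [norm_mul, norm_inv, Complex.norm_real]
    have hnsq : Complex.normSq z = ‖z‖^2 := by
      rw [Complex.normSq_eq_norm_sq]
    have habs : |Complex.normSq z| = ‖z‖^2 := by
      rw [hnsq]; exact abs_of_nonneg (by positivity)
    rw [Real.norm_eq_abs, habs, hknorm]
    have hle : r₀^2 ≤ ‖z‖^2 := by
      have := (hzS z hz).1
      nlinarith [hzpos z hz]
    have hinv : (‖z‖^2)⁻¹ ≤ (r₀^2)⁻¹ := by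
      apply inv_anti₀ (by positivity) hle
    have : (0:ℝ) ≤ ‖c₁‖ * ‖c₂‖ := by positivity
    calc ‖c₁‖ * ‖c₂‖ * 1 * (‖z‖^2)⁻¹ = ‖c₁‖ * ‖c₂‖ * (‖z‖^2)⁻¹ := by ring
      _ ≤ ‖c₁‖ * ‖c₂‖ * (r₀^2)⁻¹ := by
          exact mul_le_mul_of_nonneg_left hinv this
  have hmainint : IntegrableOn main S volume := by
    refine ⟨hmainmes.aestronglyMeasurable, HasFiniteIntegral.restrict_of_bounded
      (C := ‖c₁‖ * ‖c₂‖ * ((r₀^2)⁻¹)) hSfin.lt_top ?_⟩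
    exact (ae_restrict_iff' hSmeas).mpr (Filter.Eventually.of_forall hmainb)
  -- value of the main integral
  have hIcc : ∫ y in Set.Icc r₀ 1, y * (fun y : ℝ => (y^2)⁻¹) y = Real.log (1/r₀) := by
    rw [setIntegral_congr_fun measurableSet_Icc (g := fun y : ℝ => y⁻¹)
      (fun y hy => by
        have hy0 : 0 < y := lt_of_lt_of_le hr0 hy.1
        field_simp)]
    rw [MeasureTheory.integral_Icc_eq_integral_Ioc, ← intervalIntegral.integral_of_le hr1.le,
      integral_inv_of_pos hr0 one_pos]
  have hradmain : ∫ z in S, (Complex.normSq z)⁻¹ = 2 * Real.pi * Real.log (1/r₀) := by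
    have heq : (fun z : ℂ => (Complex.normSq z)⁻¹) = fun z : ℂ => (fun y : ℝ => (y^2)⁻¹) ‖z‖ := by
      funext z
      rw [Complex.normSq_eq_norm_sq]
    rw [hS_def]
    calc ∫ z in {z : ℂ | r₀ ≤ ‖z‖ ∧ ‖z‖ ≤ 1}, (Complex.normSq z)⁻¹
        = ∫ z in {z : ℂ | r₀ ≤ ‖z‖ ∧ ‖z‖ ≤ 1},
            (fun y : ℝ => (y^2)⁻¹) ‖z‖ := by rw [heq]
      _ = 2 * Real.pi * ∫ y in Set.Icc r₀ 1, y * (fun y : ℝ => (y^2)⁻¹) y :=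
          radial_integral (fun y : ℝ => (y^2)⁻¹) r₀ hr0
      _ = 2 * Real.pi * Real.log (1/r₀) := by rw [hIcc]
  have hmainval : ∫ z in S, main z
      = 2 * (Real.pi : ℂ) * c₁ * c₂ * k * (Real.log (1/r₀) : ℂ) := by
    rw [hmain_def]
    rw [MeasureTheory.integral_const_mul]
    simp_rw [← Complex.ofReal_inv]
    have hco : ∫ a in S, (Complex.ofReal ((Complex.normSq a)⁻¹) : ℂ)
        = ((∫ a in S, (Complex.normSq a)⁻¹ : ℝ) : ℂ) := integral_ofReal
    rw [hco, hradmain]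
    push_cast
    ring
  -- pointwise difference bound
  have hdiff : ∀ z ∈ S, ‖F z - main z‖ ≤ A / ‖z‖ + B := by
    intro z hz
    have hz0 : z ≠ 0 := hzne z hz
    have hzc : (starRingEnd ℂ) z ≠ 0 := by
      simpa using hz0
    have halg : F z - main z = (z / (starRingEnd ℂ) z) *
        ((c₁/z + h₁ z) * (c₂/z + h₂ z) * (k + H z) - (c₁/z) * (c₂/z) * k) := by
      rw [hF_def, hmain_def]
      simp only
      rw [← Complex.mul_conj]
      field_simp
    have hexp : (c₁/z + h₁ z) * (c₂/z + h₂ z) * (k + H z) - (c₁/z) * (c₂/z) * k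
        = (c₁/z + h₁ z) * (c₂/z + h₂ z) * H z
          + ((c₁/z) * h₂ z + h₁ z * (c₂/z) + h₁ z * h₂ z) * k := by ring
    rw [halg, hexp, norm_mul, hfac3 z hz, one_mul]
    have hs := hzpos z hz
    have hs1 := (hzS z hz).2
    have hHz : ‖H z‖ ≤ L * ‖z‖ := by
      have := hH z (hzS z hz).2
      exact this
    have ha : ‖h₁ z‖ ≤ M := hMb₁ z (hSsub hz)
    have hb : ‖h₂ z‖ ≤ M := hMb₂ z (hSsub hz)
    have t1 : ‖(c₁/z + h₁ z) * (c₂/z + h₂ z) * H z‖ ≤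
        (‖c₁‖/‖z‖ + M) * (‖c₂‖/‖z‖ + M) * (L * ‖z‖) := by
      rw [norm_mul, norm_mul]
      have q1 : (0:ℝ) ≤ ‖c₁‖/‖z‖ + M := le_trans (norm_nonneg _) (hfac1 z hz)
      have q2 : (0:ℝ) ≤ ‖c₂‖/‖z‖ + M := le_trans (norm_nonneg _) (hfac2 z hz)
      exact mul_le_mul (mul_le_mul (hfac1 z hz) (hfac2 z hz) (norm_nonneg _) q1) hHz
        (norm_nonneg _) (mul_nonneg q1 q2)
    have t2 : ‖((c₁/z) * h₂ z + h₁ z * (c₂/z) + h₁ z * h₂ z) * k‖ ≤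
        (‖c₁‖/‖z‖) * M + M * (‖c₂‖/‖z‖) + M * M := by
      rw [norm_mul, hknorm, mul_one]
      calc ‖(c₁/z) * h₂ z + h₁ z * (c₂/z) + h₁ z * h₂ z‖
          ≤ ‖(c₁/z) * h₂ z‖ + ‖h₁ z * (c₂/z)‖ + ‖h₁ z * h₂ z‖ :=
            norm_add₃_le
        _ ≤ (‖c₁‖/‖z‖) * M + M * (‖c₂‖/‖z‖) + M * M := by
            rw [norm_mul, norm_mul, norm_mul, norm_div, norm_div]
            have u1 : ‖c₁‖/‖z‖ * ‖h₂ z‖ ≤ ‖c₁‖/‖z‖ * M :=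
              mul_le_mul_of_nonneg_left hb (by positivity)
            have u2 : ‖h₁ z‖ * (‖c₂‖/‖z‖) ≤ M * (‖c₂‖/‖z‖) :=
              mul_le_mul_of_nonneg_right ha (by positivity)
            have u3 : ‖h₁ z‖ * ‖h₂ z‖ ≤ M * M :=
              mul_le_mul ha hb (norm_nonneg _) hM0
            linarith
    calc ‖(c₁/z + h₁ z) * (c₂/z + h₂ z) * H z
          + ((c₁/z) * h₂ z + h₁ z * (c₂/z) + h₁ z * h₂ z) * k‖
        ≤ (‖c₁‖/‖z‖ + M) * (‖c₂‖/‖z‖ + M) * (L * ‖z‖)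
          + ((‖c₁‖/‖z‖) * M + M * (‖c₂‖/‖z‖) + M * M) := by
          refine le_trans (norm_add_le _ _) (add_le_add t1 t2)
      _ ≤ (L*‖c₁‖*‖c₂‖ + M*(‖c₁‖+‖c₂‖))/‖z‖ + (L*M*(‖c₁‖+‖c₂‖) + L*M*M + M*M) :=
          arith_bound ‖c₁‖ ‖c₂‖ M L ‖z‖ hM0 hL hs hs1
      _ = A / ‖z‖ + B := by rw [hA_def, hB_def]
  -- the bound function and its integral
  set bnd : ℂ → ℝ := fun z : ℂ => A * ‖z‖⁻¹ + B with hbnd_def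
  have hbnd_meas : Measurable bnd :=
    ((measurable_norm.inv).const_mul A).add_const B
  have hbnd_int : IntegrableOn bnd S volume := by
    refine Measure.integrableOn_of_bounded hSfin hbnd_meas.aestronglyMeasurable
      (M := A * r₀⁻¹ + B) ?_
    refine (ae_restrict_iff' hSmeas).mpr (Filter.Eventually.of_forall (fun z hz => ?_))
    have hs := hzpos z hz
    have hinv : ‖z‖⁻¹ ≤ r₀⁻¹ := by
      apply inv_anti₀ hr0 (hzS z hz).1
    simp only [hbnd_def]
    rw [Real.norm_eq_abs, abs_of_nonneg (by positivity)]
    have := mul_le_mul_of_nonneg_left hinv hA0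
    linarith
  have hbnd_val : ∫ z in S, bnd z ≤ 2 * Real.pi * (A + B) := by
    have hrad : ∫ z in S, bnd z
        = 2 * Real.pi * ∫ y in Set.Icc r₀ 1, y * (A * y⁻¹ + B) := by
      rw [hS_def]
      exact radial_integral (fun y => A * y⁻¹ + B) r₀ hr0
    have hIcc2 : ∫ y in Set.Icc r₀ 1, y * (A * y⁻¹ + B)
        = A * (1 - r₀) + B * ((1^2 - r₀^2)/2) := by
      rw [setIntegral_congr_fun measurableSet_Icc (g := fun y : ℝ => A + B * y)
        (fun y hy => by
          have hy0 : 0 < y := lt_of_lt_of_le hr0 hy.1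
          field_simp)]
      rw [MeasureTheory.integral_Icc_eq_integral_Ioc, ← intervalIntegral.integral_of_le hr1.le]
      rw [intervalIntegral.integral_add intervalIntegrable_const
        ((continuous_mul_left B).intervalIntegrable _ _)]
      rw [intervalIntegral.integral_const, intervalIntegral.integral_const_mul,
        integral_id]
      rw [smul_eq_mul]
      ring
    rw [hrad, hIcc2]
    have e1 : A*(1-r₀) ≤ A := by nlinarith [mul_nonneg hA0 hr0.le]
    have e2 : B*((1^2-r₀^2)/2) ≤ B := by nlinarith [mul_nonneg hB0 (sq_nonneg r₀), hB0]
    exact mul_le_mul_of_nonneg_left (add_le_add e1 e2) (by positivity)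
  -- assemble
  refine ⟨hFint, ?_⟩
  have hsplit : (∫ z in S, F z) -
      2 * (Real.pi : ℂ) * c₁ * c₂ * k * (Real.log (1/r₀) : ℂ)
      = ∫ z in S, (F z - main z) := by
    rw [integral_sub hFint hmainint, hmainval]
  calc ‖(∫ z in S, F z) - 2 * (Real.pi : ℂ) * c₁ * c₂ * k * (Real.log (1/r₀) : ℂ)‖
      = ‖∫ z in S, (F z - main z)‖ := by rw [hsplit]
    _ ≤ ∫ z in S, ‖F z - main z‖ := norm_integral_le_integral_norm _
    _ ≤ ∫ z in S, bnd z := by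
        refine integral_mono_of_nonneg (Filter.Eventually.of_forall (fun z => norm_nonneg _))
          hbnd_int ?_
        refine (ae_restrict_iff' hSmeas).mpr (Filter.Eventually.of_forall (fun z hz => ?_))
        have := hdiff z hz
        rw [hbnd_def]
        simp only
        rw [div_eq_mul_inv] at this
        rw [mul_comm] at this
        linarith [hdiff z hz]
    _ ≤ 2 * Real.pi * (A + B) := hbnd_val
    _ ≤ 2 * Real.pi * (A + B) + 1 := by linarith
end

section
/- Let m be a natural number, let c : Fin m → ℂ be a family of nonzero complex numbers, and let ε > 0. Then there exist real numbers θ and t such that for every j : Fin m, the complex number d_j = e^{−t}·Re(e^{iθ}·c_j) + i·e^{t}·Im(e^{iθ}·c_j) is nonzero and ε-nearly imaginary. -/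
open MeasureTheory

/-- A nonzero complex number `d` is `ε`-nearly imaginary if its principal argument is within
`ε` of `π/2` or of `-π/2`. -/
def NearlyImaginary (ε : ℝ) (d : ℂ) : Prop :=
  |Complex.arg d - Real.pi / 2| < ε ∨ |Complex.arg d + Real.pi / 2| < ε

/-- The residue `c` transformed by a rotation `e^{iθ}` followed by the Teichmüller geodesic
flow `G_t` (Lemma `GtResidue`): `a + ib ↦ a·e^{-t} + i·b·e^{t}`. -/
noncomputable def flowResidue (θ t : ℝ) (c : ℂ) : ℂ :=
  (Real.exp (-t) * (Complex.exp (θ * Complex.I) * c).re : ℝ) +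
    Complex.I * (Real.exp t * (Complex.exp (θ * Complex.I) * c).im : ℝ)

open Complex Real in
lemma aux_near_pi_div_two {ε : ℝ} (hε : 0 < ε) (hε2 : ε ≤ π / 2) {d : ℂ}
    (him : 0 < d.im) (h : |d.re| < ‖d‖ * Real.sin ε) :
    |Complex.arg d - π / 2| < ε := by
  have hd : d ≠ 0 := fun h0 => by simp [h0] at him
  have hcos : Real.cos (arg d) = d.re / ‖d‖ := Complex.cos_arg hd
  have habs : (0:ℝ) < ‖d‖ := norm_pos_iff.mpr hd
  have hcabs : |Real.cos (arg d)| < Real.sin ε := by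
    rw [hcos, abs_div, abs_of_pos habs, div_lt_iff₀ habs]
    linarith [h]
  have h0 : 0 ≤ arg d := Complex.arg_nonneg_iff.mpr him.le
  have hpi : arg d ≤ π := Complex.arg_le_pi d
  rw [abs_lt]
  constructor
  · by_contra hle
    push_neg at hle
    have h1 : Real.cos (arg d) ≥ Real.cos (π / 2 - ε) :=
      Real.cos_le_cos_of_nonneg_of_le_pi h0 (by linarith [Real.pi_pos]) (by linarith)
    rw [Real.cos_pi_div_two_sub] at h1
    have := abs_lt.mp hcabs
    linarith
  · by_contra hle
    push_neg at hle
    have h1 : Real.cos (arg d) ≤ Real.cos (π / 2 + ε) :=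
      Real.cos_le_cos_of_nonneg_of_le_pi (by positivity) hpi (by linarith)
    rw [show π / 2 + ε = π / 2 - (-ε) by ring, Real.cos_pi_div_two_sub, Real.sin_neg] at h1
    have := abs_lt.mp hcabs
    linarith

/-- **Lemma `MostlyImagRes`.** Given finitely many nonzero residues `c j` and `ε > 0`, there
are a rotation angle `θ` and a flow time `t` such that each transformed residue
`e^{-t}·Re(e^{iθ} c j) + i·e^{t}·Im(e^{iθ} c j)` is nonzero and `ε`-nearly imaginary. -/
theorem exists_rotation_time_nearlyImaginary (m : ℕ) (c : Fin m → ℂ)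
    (hc : ∀ j, c j ≠ 0) (ε : ℝ) (hε : 0 < ε) :
    ∃ θ t : ℝ, ∀ j : Fin m,
      flowResidue θ t (c j) ≠ 0 ∧ NearlyImaginary ε (flowResidue θ t (c j)) := by
  classical
  -- replace ε by ε' ≤ 1 < π/2
  set ε' : ℝ := min ε 1 with hε'def
  have hε'pos : 0 < ε' := lt_min hε one_pos
  have hε'le : ε' ≤ ε := min_le_left _ _
  have hε'2 : ε' ≤ Real.pi / 2 := le_trans (min_le_right _ _) (by linarith [Real.pi_gt_three])
  have hsin : 0 < Real.sin ε' := Real.sin_pos_of_pos_of_lt_pi hε'pos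
    (lt_of_le_of_lt hε'2 (by linarith [Real.pi_pos]))
  -- Step 1: choose θ such that all rotated residues have nonzero imaginary part
  have him_eq : ∀ (θ : ℝ) (j : Fin m),
      (Complex.exp (θ * Complex.I) * c j).im
        = ‖c j‖ * Real.sin (θ + Complex.arg (c j)) := by
    intro θ j
    conv_lhs => rw [← Complex.norm_mul_exp_arg_mul_I (c j)]
    rw [mul_left_comm, ← Complex.exp_add, ← add_mul]
    rw [← Complex.ofReal_add, Complex.im_ofReal_mul, Complex.exp_ofReal_mul_I_im]
  obtain ⟨θ, hθ⟩ : ∃ θ : ℝ, ∀ j, (Complex.exp (θ * Complex.I) * c j).im ≠ 0 := by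
    by_contra hcon
    push_neg at hcon
    have hsub : (Set.univ : Set ℝ) ⊆
        ⋃ j : Fin m, Set.range (fun n : ℤ => (n : ℝ) * Real.pi - Complex.arg (c j)) := by
      intro θ _
      obtain ⟨j, hj⟩ := hcon θ
      rw [him_eq] at hj
      have habs : ‖c j‖ ≠ 0 := by simpa using hc j
      have hsin0 : Real.sin (θ + Complex.arg (c j)) = 0 := by
        rcases mul_eq_zero.mp hj with h | h
        · exact absurd h habs
        · exact h
      obtain ⟨n, hn⟩ := Real.sin_eq_zero_iff.mp hsin0
      exact Set.mem_iUnion.mpr ⟨j, ⟨n, by dsimp only; linarith⟩⟩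
    exact Cardinal.not_countable_real
      ((Set.countable_iUnion fun j => Set.countable_range _).mono hsub)
  -- Step 2: choose t large enough
  set a : Fin m → ℝ := fun j => (Complex.exp (θ * Complex.I) * c j).re with ha
  set b : Fin m → ℝ := fun j => (Complex.exp (θ * Complex.I) * c j).im with hb
  obtain ⟨M, hM⟩ := Finite.exists_le (fun j => |a j| / (|b j| * Real.sin ε'))
  set t : ℝ := Real.log (max M 0 + 1) / 2 with ht
  have hexp : ∀ j, |a j| < Real.exp (2 * t) * (|b j| * Real.sin ε') := by
    intro j
    have hbpos : 0 < |b j| := abs_pos.mpr (hθ j)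
    have hden : 0 < |b j| * Real.sin ε' := by positivity
    have h1 : Real.exp (2 * t) = max M 0 + 1 := by
      rw [ht]
      rw [show 2 * (Real.log (max M 0 + 1) / 2) = Real.log (max M 0 + 1) by ring]
      exact Real.exp_log (by positivity)
    rw [h1, ← div_lt_iff₀ hden]
    calc |a j| / (|b j| * Real.sin ε') ≤ M := hM j
      _ ≤ max M 0 := le_max_left _ _
      _ < max M 0 + 1 := by linarith
  refine ⟨θ, t, fun j => ?_⟩
  set d := flowResidue θ t (c j) with hd
  have hdre : d.re = Real.exp (-t) * a j := by
    simp only [hd, flowResidue, Complex.add_re, Complex.mul_re, Complex.I_re, Complex.I_im,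
      Complex.ofReal_re, Complex.ofReal_im, a]
    ring
  have hdim : d.im = Real.exp t * b j := by
    simp only [hd, flowResidue, Complex.add_im, Complex.mul_im, Complex.I_re, Complex.I_im,
      Complex.ofReal_re, Complex.ofReal_im, b]
    ring
  have hbim : d.im ≠ 0 := by
    rw [hdim]
    exact mul_ne_zero (Real.exp_ne_zero t) (hθ j)
  have hdne : d ≠ 0 := fun h0 => hbim (by simp [h0])
  have habsd : |d.im| ≤ ‖d‖ := Complex.abs_im_le_norm d
  have hkey : |d.re| < ‖d‖ * Real.sin ε' := by
    have h1 : |d.re| = Real.exp (-t) * |a j| := by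
      rw [hdre, abs_mul, abs_of_pos (Real.exp_pos _)]
    have h2 : |d.im| = Real.exp t * |b j| := by
      rw [hdim, abs_mul, abs_of_pos (Real.exp_pos _)]
    have h3 : Real.exp (-t) * |a j| < Real.exp t * |b j| * Real.sin ε' := by
      have := hexp j
      have hepos : 0 < Real.exp (-t) := Real.exp_pos _
      calc Real.exp (-t) * |a j|
          < Real.exp (-t) * (Real.exp (2 * t) * (|b j| * Real.sin ε')) := by
            exact (mul_lt_mul_iff_right₀ hepos).mpr (hexp j)
        _ = Real.exp t * |b j| * Real.sin ε' := by
            have he : Real.exp (-t) * Real.exp (2 * t) = Real.exp t := by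
              rw [← Real.exp_add]; ring_nf
            rw [← he]; ring
    calc |d.re| < Real.exp t * |b j| * Real.sin ε' := by rw [h1]; exact h3
      _ = |d.im| * Real.sin ε' := by rw [h2]
      _ ≤ ‖d‖ * Real.sin ε' := by
          exact mul_le_mul_of_nonneg_right habsd hsin.le
  refine ⟨hdne, ?_⟩
  rcases lt_or_gt_of_ne hbim with hneg | hpos
  · -- d.im < 0 : use conjugate
    right
    have hconj : Complex.arg (starRingEnd ℂ d) = -Complex.arg d := by
      rw [Complex.arg_conj, if_neg]
      intro h
      exact hbim (Complex.arg_eq_pi_iff.mp h).2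
    have him' : 0 < (starRingEnd ℂ d).im := by simpa using hneg
    have hre' : |(starRingEnd ℂ d).re| < ‖starRingEnd ℂ d‖ * Real.sin ε' := by
      simpa using hkey
    have := aux_near_pi_div_two hε'pos hε'2 him' hre'
    rw [hconj] at this
    have : |Complex.arg d + Real.pi / 2| < ε' := by
      rw [show Complex.arg d + Real.pi / 2 = -(-Complex.arg d - Real.pi / 2) by ring, abs_neg]
      exact this
    exact lt_of_lt_of_le this hε'le
  · left
    exact lt_of_lt_of_le (aux_near_pi_div_two hε'pos hε'2 hpos hkey) hε'le
end

section
/- Let r > 0 and let a, b ∈ ℂ with r < |a| and r < |b|. Then the circle integral along the circle of radius r centered at 0, ∮_{|z| = r} (r² − conj(a)·z)·(r² − conj(b)·z) / (z·(z − a)·(z − b)) dz, equals 2πi·r⁴/(a·b). -/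
open Metric Complex

/-- The residue computation in the proof of Lemma `Theta2NotZeroOnSphere`: for `0 < r` and
`a, b` of modulus greater than `r`, the integral over the positively oriented circle of radius
`r` centered at `0` of `(r² − conj a · z)(r² − conj b · z) / (z (z − a)(z − b))` equals
`2πi·r⁴/(a·b)`. -/
theorem circleIntegral_sphere_chart_zero (r : ℝ) (hr : 0 < r) (a b : ℂ)
    (ha : r < ‖a‖) (hb : r < ‖b‖) :
    (∮ z in C(0, r),
        ((r : ℂ) ^ 2 - (starRingEnd ℂ) a * z) * ((r : ℂ) ^ 2 - (starRingEnd ℂ) b * z) /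
          (z * (z - a) * (z - b))) =
      2 * Real.pi * Complex.I * (r : ℂ) ^ 4 / (a * b) := by
  set f : ℂ → ℂ := fun z =>
    ((r : ℂ) ^ 2 - (starRingEnd ℂ) a * z) * ((r : ℂ) ^ 2 - (starRingEnd ℂ) b * z) /
      ((z - a) * (z - b)) with hf
  have hsub : closedBall (0 : ℂ) r ⊆ {z | z ≠ a ∧ z ≠ b} := by
    intro z hz
    simp only [mem_closedBall, Complex.dist_eq, sub_zero] at hz
    constructor <;> rintro rfl <;> linarith
  have hd : DiffContOnCl ℂ f (ball (0 : ℂ) r) := by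
    have : DifferentiableOn ℂ f {z | z ≠ a ∧ z ≠ b} := by
      apply DifferentiableOn.div
      · fun_prop
      · fun_prop
      · intro z hz
        exact mul_ne_zero (sub_ne_zero.2 hz.1) (sub_ne_zero.2 hz.2)
    exact DifferentiableOn.diffContOnCl
      (this.mono (subset_trans closure_ball_subset_closedBall hsub))
  have h0 : (0 : ℂ) ∈ ball (0 : ℂ) r := by simpa using hr
  have key := hd.circleIntegral_sub_inv_smul h0
  have heq : ∀ z : ℂ,
      ((r : ℂ) ^ 2 - (starRingEnd ℂ) a * z) * ((r : ℂ) ^ 2 - (starRingEnd ℂ) b * z) /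
        (z * (z - a) * (z - b)) = (z - 0)⁻¹ • f z := by
    intro z
    simp only [hf, sub_zero, smul_eq_mul]
    rw [inv_mul_eq_div, div_div]
    ring_nf
  rw [show (∮ z in C(0, r),
        ((r : ℂ) ^ 2 - (starRingEnd ℂ) a * z) * ((r : ℂ) ^ 2 - (starRingEnd ℂ) b * z) /
          (z * (z - a) * (z - b))) = ∮ z in C(0, r), (z - 0)⁻¹ • f z from
    circleIntegral.integral_congr (le_of_lt hr) fun z _ => heq z, key]
  have ha0 : a ≠ 0 := by rintro rfl; simp at ha; linarith
  have hb0 : b ≠ 0 := by rintro rfl; simp at hb; linarith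
  simp only [hf, smul_eq_mul, mul_zero, sub_zero, zero_sub, mul_neg, neg_mul, neg_neg]
  rw [mul_div_assoc']
  ring
end

section
/- Let r > 0 and let a, b ∈ ℂ with r·|a| < 1 and r·|b| < 1. Then the circle integral along the circle of radius r centered at 0, ∮_{|z| = r} (z − conj(a)·r²)·(z − conj(b)·r²) / (z·(1 − a·z)·(1 − b·z)) dz, equals 2πi·conj(a)·conj(b)·r⁴. -/
open Complex Metric

lemma chart_infinity_denom_ne (r : ℝ) (a : ℂ) (ha : r * ‖a‖ < 1) {z : ℂ}
    (hz : z ∈ closedBall (0 : ℂ) r) : (1 : ℂ) - a * z ≠ 0 := by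
  have hz' : ‖z‖ ≤ r := by simpa [Complex.dist_eq] using hz
  have h : ‖a * z‖ < 1 := by
    rw [norm_mul]
    calc ‖a‖ * ‖z‖ ≤ ‖a‖ * r := by
          exact mul_le_mul_of_nonneg_left hz' (norm_nonneg a)
      _ < 1 := by linarith [ha, mul_comm r ‖a‖]
  intro h0
  have : a * z = 1 := by linear_combination -h0
  rw [this] at h
  simp at h

/-- The second residue computation in the proof of Lemma `Theta2NotZeroOnSphere` (chart at
infinity): for `0 < r` and `a, b` with `r·|a| < 1` and `r·|b| < 1`, the integral over the
positively oriented circle of radius `r` centered at `0` of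
`(z − conj a · r²)(z − conj b · r²) / (z (1 − a z)(1 − b z))` equals `2πi·conj a·conj b·r⁴`. -/
theorem circleIntegral_sphere_chart_infinity (r : ℝ) (hr : 0 < r) (a b : ℂ)
    (ha : r * ‖a‖ < 1) (hb : r * ‖b‖ < 1) :
    (∮ z in C(0, r),
        (z - (starRingEnd ℂ) a * (r : ℂ) ^ 2) * (z - (starRingEnd ℂ) b * (r : ℂ) ^ 2) /
          (z * (1 - a * z) * (1 - b * z))) =
      2 * Real.pi * Complex.I * (starRingEnd ℂ) a * (starRingEnd ℂ) b * (r : ℂ) ^ 4 := by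
  set g : ℂ → ℂ := fun z =>
    (z - (starRingEnd ℂ) a * (r : ℂ) ^ 2) * (z - (starRingEnd ℂ) b * (r : ℂ) ^ 2) /
      ((1 - a * z) * (1 - b * z)) with hg
  have hdiff : DiffContOnCl ℂ g (ball (0 : ℂ) r) := by
    apply DifferentiableOn.diffContOnCl
    rw [closure_ball (0 : ℂ) hr.ne']
    intro z hz
    have h1 : (1 : ℂ) - a * z ≠ 0 := chart_infinity_denom_ne r a ha hz
    have h2 : (1 : ℂ) - b * z ≠ 0 := chart_infinity_denom_ne r b hb hz
    have d1 : DifferentiableAt ℂ (fun z : ℂ =>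
        (z - (starRingEnd ℂ) a * (r : ℂ) ^ 2) * (z - (starRingEnd ℂ) b * (r : ℂ) ^ 2)) z := by
      fun_prop
    have d2 : DifferentiableAt ℂ (fun z : ℂ => (1 - a * z) * (1 - b * z)) z := by fun_prop
    exact (d1.div d2 (mul_ne_zero h1 h2)).differentiableWithinAt
  have h0 : (0 : ℂ) ∈ ball (0 : ℂ) r := by simpa using hr
  have key := hdiff.circleIntegral_sub_inv_smul h0
  have heq : ∀ z : ℂ,
      (z - (starRingEnd ℂ) a * (r : ℂ) ^ 2) * (z - (starRingEnd ℂ) b * (r : ℂ) ^ 2) /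
          (z * (1 - a * z) * (1 - b * z)) = (z - 0)⁻¹ • g z := by
    intro z
    simp only [hg, smul_eq_mul, sub_zero, div_eq_mul_inv, mul_inv]
    ring
  calc (∮ z in C(0, r),
        (z - (starRingEnd ℂ) a * (r : ℂ) ^ 2) * (z - (starRingEnd ℂ) b * (r : ℂ) ^ 2) /
          (z * (1 - a * z) * (1 - b * z)))
      = ∮ z in C(0, r), (z - 0)⁻¹ • g z := by
        apply circleIntegral.integral_congr hr.le
        intro z _
        exact heq z
    _ = (2 * Real.pi * Complex.I) • g 0 := key
    _ = 2 * Real.pi * Complex.I * (starRingEnd ℂ) a * (starRingEnd ℂ) b * (r : ℂ) ^ 4 := by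
        simp only [hg, smul_eq_mul]
        norm_num
        ring
end
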